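/- For the deterministic inventory policy, the average ordering measures are not tight: for any ε < 1/2 and any compact set Γ ⊂ {(y,z) ∈ ℝ²: y ≤ z}, there exists n such that m_{1,t_{n+1,1}}(Γᶜ) > ε. Specifically, m_{1,t_{n+1,1}}({(2^((n-1)/2), 2^((n-1)/2))}) = 2^(n-1)/(2^n + (2^(n/2)-1)/(2^(1/2)-1) - 1), which converges to 1/2 as n → ∞. -/

import Mathlib

open Filter Classical

/-- Start time `t_{i,1}` of cycle `i` (`i ≥ 1`) of the deterministic policy. -/
noncomputable def cycleStart (i : ℕ) : ℝ :=
  2 ^ (i - 1) + ((2 : ℝ) ^ (((i : ℝ) - 1) / 2) - 1) / (Real.sqrt 2 - 1) - 1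

/-- Time of the `j`-th order (`1 ≤ j ≤ 2^i + 1`) of cycle `i ≥ 1`. -/
noncomputable def ordTime (i j : ℕ) : ℝ :=
  if j ≤ 2 ^ (i - 1) then cycleStart i + (j - 1 : ℕ) else cycleStart i + 2 ^ (i - 1)

/-- Pre-order inventory level of the `j`-th order of cycle `i`: the Phase-1
orders and the large order are placed when the inventory hits 0; the size-0
orders are placed immediately after the large order, at level `2^((i-1)/2)`. -/
noncomputable def ordPre (i j : ℕ) : ℝ :=
  if j ≤ 2 ^ (i - 1) + 1 then 0 else (2 : ℝ) ^ (((i : ℝ) - 1) / 2)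

/-- Size of the `j`-th order of cycle `i`. -/
noncomputable def ordSize (i j : ℕ) : ℝ :=
  if j ≤ 2 ^ (i - 1) then 1
  else if j = 2 ^ (i - 1) + 1 then (2 : ℝ) ^ (((i : ℝ) - 1) / 2) else 0

/-- Post-order inventory level of the `j`-th order of cycle `i`. -/
noncomputable def ordPost (i j : ℕ) : ℝ := ordPre i j + ordSize i j

/-- The average ordering measure over the horizon `[0, t]`:
`m_{1,t}(Γ) = (1/t) · #{orders placed by time t with (pre, post) levels in Γ}`. -/

noncomputable def m1 (t : ℝ) (Γ : Set (ℝ × ℝ)) : ℝ :=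
  (1 / t) * ∑' i : ℕ, ∑ j ∈ Finset.Icc 1 (2 ^ (i + 1) + 1),
    if ordTime (i + 1) j ≤ t ∧ (ordPre (i + 1) j, ordPost (i + 1) j) ∈ Γ then (1 : ℝ)
    else 0

lemma one_lt_sqrt2 : 1 < Real.sqrt 2 := by
  nlinarith [Real.sq_sqrt (by norm_num : (0:ℝ) ≤ 2), Real.sqrt_nonneg 2]

lemma sqrt2_lt_two : Real.sqrt 2 < 2 := by
  nlinarith [Real.sq_sqrt (by norm_num : (0:ℝ) ≤ 2), Real.sqrt_nonneg 2]

lemma rpow_nat_half (n : ℕ) : (2:ℝ) ^ ((n:ℝ)/2) = (Real.sqrt 2) ^ n := by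
  rw [show ((n:ℝ)/2) = (1/2) * n by ring, Real.rpow_mul (by norm_num),
    ← Real.sqrt_eq_rpow, Real.rpow_natCast]

lemma cycleStart_succ (n : ℕ) :
    cycleStart (n+1) = 2^n + ((Real.sqrt 2)^n - 1)/(Real.sqrt 2 - 1) - 1 := by
  unfold cycleStart
  rw [Nat.add_sub_cancel, show (((n+1:ℕ):ℝ) - 1)/2 = (n:ℝ)/2 by push_cast; ring,
    rpow_nat_half]

lemma cycleStart_succ_ge (n : ℕ) : (2:ℝ)^n - 1 ≤ cycleStart (n+1) := by
  rw [cycleStart_succ]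
  have h1 : (1:ℝ) ≤ (Real.sqrt 2)^n := one_le_pow₀ (le_of_lt one_lt_sqrt2)
  have h2 : (0:ℝ) < Real.sqrt 2 - 1 := by linarith [one_lt_sqrt2]
  have : (0:ℝ) ≤ ((Real.sqrt 2)^n - 1)/(Real.sqrt 2 - 1) :=
    div_nonneg (by linarith) (by linarith)
  linarith

lemma cycleStart_pos {n : ℕ} (hn : 1 ≤ n) : 0 < cycleStart (n+1) := by
  have h := cycleStart_succ_ge n
  have : (2:ℝ) ≤ 2^n := by
    calc (2:ℝ) = 2^1 := by norm_num
    _ ≤ 2^n := pow_le_pow_right₀ one_le_two hn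
  linarith

lemma cycleStart_le_ordTime (i j : ℕ) : cycleStart i ≤ ordTime i j := by
  unfold ordTime
  split
  · exact le_add_of_nonneg_right (by positivity)
  · exact le_add_of_nonneg_right (by positivity)

lemma step_le (m : ℕ) : cycleStart (m+1) + 2^m ≤ cycleStart (m+2) := by
  rw [cycleStart_succ, show m + 2 = (m+1) + 1 by ring, cycleStart_succ]
  have h2 : (0:ℝ) < Real.sqrt 2 - 1 := by linarith [one_lt_sqrt2]
  have hp : (Real.sqrt 2)^m ≤ (Real.sqrt 2)^(m+1) :=
    pow_le_pow_right₀ (le_of_lt one_lt_sqrt2) (by omega)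
  have hd : ((Real.sqrt 2)^m - 1)/(Real.sqrt 2 - 1)
      ≤ ((Real.sqrt 2)^(m+1) - 1)/(Real.sqrt 2 - 1) := by
    exact (div_le_div_iff_of_pos_right h2).mpr (by linarith)

  have hpow : (2:ℝ)^(m+1) = 2 * 2^m := by ring
  linarith

lemma F_summable (t : ℝ) (Γ : Set (ℝ × ℝ)) :
    Summable (fun i : ℕ => ∑ j ∈ Finset.Icc 1 (2 ^ (i + 1) + 1),
      if ordTime (i + 1) j ≤ t ∧ (ordPre (i + 1) j, ordPost (i + 1) j) ∈ Γ then (1 : ℝ)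
      else 0) := by
  apply summable_of_ne_finset_zero (s := Finset.range (⌈t⌉₊ + 1))
  intro i hi
  apply Finset.sum_eq_zero
  intro j _
  rw [if_neg]
  rintro ⟨h1, -⟩
  have hi' : ⌈t⌉₊ + 1 ≤ i := by
    simpa [Finset.mem_range, Nat.lt_succ_iff] using hi
  have hti : t < (i:ℝ) := by
    have := Nat.le_ceil t
    have : ((⌈t⌉₊ + 1 : ℕ):ℝ) ≤ (i:ℝ) := by exact_mod_cast hi'
    push_cast at this
    linarith [Nat.le_ceil t]
  have h2i : (i:ℝ) + 1 ≤ 2^i := by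
    have := Nat.lt_two_pow_self (n := i)
    exact_mod_cast this
  have := cycleStart_succ_ge i
  have := cycleStart_le_ordTime (i+1) j
  linarith

lemma m1_mono {t : ℝ} (ht : 0 < t) {S T : Set (ℝ × ℝ)} (hST : S ⊆ T) :
    m1 t S ≤ m1 t T := by
  unfold m1
  apply mul_le_mul_of_nonneg_left _ (by positivity)
  apply Summable.tsum_le_tsum _ (F_summable t S) (F_summable t T)
  intro i
  apply Finset.sum_le_sum
  intro j _
  split_ifs with h1 h2
  · exact le_rfl
  · exact absurd ⟨h1.1, hST h1.2⟩ h2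
  · norm_num
  · exact le_rfl


lemma core_count (m : ℕ) :
    m1 (cycleStart (m+2)) ({((2:ℝ)^((m:ℝ)/2), (2:ℝ)^((m:ℝ)/2))} : Set (ℝ × ℝ))
    = (1 / cycleStart (m+2)) * 2^m := by
  have hapos : (0:ℝ) < (2:ℝ)^((m:ℝ)/2) := Real.rpow_pos_of_pos (by norm_num) _
  unfold m1
  congr 1
  rw [tsum_eq_single m]
  · -- the cycle-(m+1) sum equals 2^m
    have hcast : (((m+1:ℕ):ℝ) - 1)/2 = (m:ℝ)/2 := by push_cast; ring
    have target : (∑ j ∈ Finset.Icc 1 (2^(m+1)+1), if 2^m + 2 ≤ j then (1:ℝ) else 0)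
        = 2^m := by
      rw [Finset.sum_boole]
      have hfil : (Finset.Icc 1 (2^(m+1)+1)).filter (fun j => 2^m+2 ≤ j)
          = Finset.Icc (2^m+2) (2^(m+1)+1) := by
        ext j
        simp only [Finset.mem_filter, Finset.mem_Icc]
        have : 2^(m+1) = 2*2^m := by ring
        omega
      rw [hfil, Nat.card_Icc]
      have hcard : 2^(m+1)+1+1 - (2^m+2) = 2^m := by
        have : 2^(m+1) = 2*2^m := by ring
        omega
      rw [hcard]
      push_cast
      ring
    refine Eq.trans (Finset.sum_congr rfl (fun j hj => ?_)) target
    simp only [Finset.mem_Icc] at hj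
    by_cases h1 : j ≤ 2^m
    · rw [if_neg, if_neg (by omega)]
      rintro ⟨-, hmem⟩
      have hpre : ordPre (m+1) j = (2:ℝ)^((m:ℝ)/2) := congrArg Prod.fst hmem
      rw [ordPre, Nat.add_sub_cancel, if_pos (by omega)] at hpre
      linarith
    · by_cases h2 : j = 2^m + 1
      · rw [if_neg, if_neg (by omega)]
        rintro ⟨-, hmem⟩
        have hpre : ordPre (m+1) j = (2:ℝ)^((m:ℝ)/2) := congrArg Prod.fst hmem
        rw [ordPre, Nat.add_sub_cancel, if_pos (by omega)] at hpre
        linarith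
      · have hT : ordTime (m+1) j ≤ cycleStart (m+2) := by
          rw [ordTime, Nat.add_sub_cancel, if_neg (by omega)]
          exact step_le m
        have hM : (ordPre (m + 1) j, ordPost (m + 1) j)
            ∈ ({((2:ℝ)^((m:ℝ)/2), (2:ℝ)^((m:ℝ)/2))} : Set (ℝ × ℝ)) := by
          have hpre : ordPre (m+1) j = (2:ℝ)^((m:ℝ)/2) := by
            rw [ordPre, Nat.add_sub_cancel, if_neg (by omega), hcast]
          have hsize : ordSize (m+1) j = 0 := by
            rw [ordSize, Nat.add_sub_cancel, if_neg (by omega), if_neg (by omega)]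
          rw [ordPost, hpre, hsize, add_zero]
          exact rfl
        rw [if_pos ⟨hT, hM⟩, if_pos (by omega)]
  · -- all other cycles contribute zero
    intro i hi
    apply Finset.sum_eq_zero
    intro j _
    rw [if_neg]
    rintro ⟨-, hmem⟩
    have hpre : ordPre (i+1) j = (2:ℝ)^((m:ℝ)/2) := congrArg Prod.fst hmem
    rw [ordPre, Nat.add_sub_cancel] at hpre
    split_ifs at hpre with h
    · linarith
    · rw [show (((i+1:ℕ):ℝ) - 1)/2 = (i:ℝ)/2 by push_cast; ring] at hpre
      have h1 : (i:ℝ)/2 ≤ (m:ℝ)/2 := (Real.rpow_le_rpow_left_iff one_lt_two).mp hpre.le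
      have h2 : (m:ℝ)/2 ≤ (i:ℝ)/2 := (Real.rpow_le_rpow_left_iff one_lt_two).mp hpre.ge
      have : (i:ℝ) = (m:ℝ) := by linarith
      exact hi (by exact_mod_cast this)

lemma part1 (n : ℕ) (hn : 1 ≤ n) :
    m1 (cycleStart (n + 1))
        {((2 : ℝ) ^ (((n : ℝ) - 1) / 2), (2 : ℝ) ^ (((n : ℝ) - 1) / 2))}
      = 2 ^ (n - 1)
          / (2 ^ n + ((2 : ℝ) ^ ((n : ℝ) / 2) - 1) / ((2 : ℝ) ^ ((1:ℝ) / 2) - 1) - 1) := by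
  obtain ⟨m, rfl⟩ : ∃ m, n = m + 1 := ⟨n - 1, by omega⟩
  have hcast : (((m+1:ℕ):ℝ) - 1)/2 = (m:ℝ)/2 := by push_cast; ring
  have hden : 2 ^ (m+1) + ((2 : ℝ) ^ (((m+1:ℕ) : ℝ) / 2) - 1) / ((2 : ℝ) ^ ((1:ℝ) / 2) - 1) - 1
      = cycleStart (m + 2) := by
    rw [show ((2:ℝ) ^ ((1:ℝ)/2)) = Real.sqrt 2 by
        rw [← Real.sqrt_eq_rpow],
      show (((m+1:ℕ):ℝ)/2) = (((m+1:ℕ)):ℝ)/2 by norm_num, rpow_nat_half,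
      show m + 2 = (m+1)+1 by ring, cycleStart_succ]
  rw [hcast, show m + 1 + 1 = m + 2 by ring, core_count m, Nat.add_sub_cancel, hden]
  ring

lemma part2 :
    Filter.Tendsto
      (fun n : ℕ =>
        (2 : ℝ) ^ (n - 1)
          / (2 ^ n + ((2 : ℝ) ^ ((n : ℝ) / 2) - 1) / ((2 : ℝ) ^ ((1:ℝ) / 2) - 1) - 1))
      Filter.atTop (nhds (1 / 2)) := by
  set s : ℝ := Real.sqrt 2 with hs
  have hs1 : 1 < s := one_lt_sqrt2
  have hs2 : s < 2 := sqrt2_lt_two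
  have hu : (2:ℝ) ^ ((1:ℝ)/2) = s := by rw [← Real.sqrt_eq_rpow]
  set d : ℕ → ℝ := fun n => 2 ^ n + (s ^ n - 1) / (s - 1) - 1 with hd
  have hgoal : ∀ n : ℕ,
      (2 : ℝ) ^ (n - 1)
        / (2 ^ n + ((2 : ℝ) ^ ((n : ℝ) / 2) - 1) / ((2 : ℝ) ^ ((1:ℝ) / 2) - 1) - 1)
      = (2:ℝ) ^ (n-1) / d n := by
    intro n
    rw [hu, rpow_nat_half]
  have hdiv : Filter.Tendsto (fun n : ℕ => d n / 2 ^ n) Filter.atTop (nhds 1) := by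
    have heq : ∀ n : ℕ, d n / 2 ^ n
        = 1 + ((s/2)^n - (1/2:ℝ)^n)/(s-1) - (1/2:ℝ)^n := by
      intro n
      have h2 : (2:ℝ)^n ≠ 0 := by positivity
      have hsne : s - 1 ≠ 0 := by linarith
      simp only [hd, div_pow, one_pow]
      field_simp [hd]
    have l1 : Filter.Tendsto (fun n : ℕ => (s/2:ℝ)^n) Filter.atTop (nhds 0) :=
      tendsto_pow_atTop_nhds_zero_of_lt_one (by positivity) (by
        rw [div_lt_one (by norm_num)]; exact hs2)
    have l2 : Filter.Tendsto (fun n : ℕ => (1/2:ℝ)^n) Filter.atTop (nhds 0) :=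
      tendsto_pow_atTop_nhds_zero_of_lt_one (by norm_num) (by norm_num)
    have key : Filter.Tendsto
        (fun n : ℕ => 1 + ((s/2)^n - (1/2:ℝ)^n)/(s-1) - (1/2:ℝ)^n)
        Filter.atTop (nhds (1 + ((0:ℝ) - 0)/(s-1) - 0)) :=
      (tendsto_const_nhds.add ((l1.sub l2).div_const (s-1))).sub l2
    have h0 : (1:ℝ) + ((0:ℝ) - 0)/(s-1) - 0 = 1 := by ring
    rw [h0] at key
    exact key.congr (fun n => (heq n).symm)
  have hmain : Filter.Tendsto (fun n : ℕ => (1/2:ℝ) * (d n / 2^n)⁻¹)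
      Filter.atTop (nhds (1/2)) := by
    have := (hdiv.inv₀ one_ne_zero).const_mul (1/2:ℝ)
    simpa using this
  apply Filter.Tendsto.congr' _ hmain
  filter_upwards [Filter.eventually_ge_atTop 1] with n hn
  obtain ⟨m, rfl⟩ : ∃ m, n = m + 1 := ⟨n - 1, by omega⟩
  have hdpos : 0 < d (m+1) := by
    have h := cycleStart_pos (show 1 ≤ m + 1 by omega)
    rw [cycleStart_succ] at h
    simpa [hd] using h
  have h2ne : ((2:ℝ))^(m+1) ≠ 0 := by positivity
  rw [hgoal, Nat.add_sub_cancel, inv_div, div_mul_div_comm, one_mul, pow_succ,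
    mul_comm ((2:ℝ)^m) 2, mul_div_mul_left _ _ (two_ne_zero)]


/-- Non-tightness of the average ordering measures of the deterministic cyclic
policy.  For every `n ≥ 1`, the mass placed by `m_{1, t_{n+1,1}}` on the single
diagonal point `(2^((n-1)/2), 2^((n-1)/2))` equals
`2^(n-1) / (2^n + (2^(n/2)-1)/(2^(1/2)-1) - 1)`, which converges to `1/2` as
`n → ∞`; consequently, for any `ε < 1/2` and any compact
`Γ ⊆ {(y,z) : y ≤ z}`, there is some `n` with `m_{1,t_{n+1,1}}(Γᶜ) > ε`. -/
theorem deterministic_ordering_measures_not_tight :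
    (∀ n : ℕ, 1 ≤ n →
      m1 (cycleStart (n + 1))
          {((2 : ℝ) ^ (((n : ℝ) - 1) / 2), (2 : ℝ) ^ (((n : ℝ) - 1) / 2))}
        = 2 ^ (n - 1)
            / (2 ^ n + ((2 : ℝ) ^ ((n : ℝ) / 2) - 1) / ((2 : ℝ) ^ ((1:ℝ) / 2) - 1) - 1))
    ∧ Filter.Tendsto
        (fun n : ℕ =>
          (2 : ℝ) ^ (n - 1)
            / (2 ^ n + ((2 : ℝ) ^ ((n : ℝ) / 2) - 1) / ((2 : ℝ) ^ ((1:ℝ) / 2) - 1) - 1))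
        Filter.atTop (nhds (1 / 2))
    ∧ ∀ ε : ℝ, ε < 1 / 2 → ∀ Γ : Set (ℝ × ℝ), IsCompact Γ →
        Γ ⊆ {p : ℝ × ℝ | p.1 ≤ p.2} →
        ∃ n : ℕ, 1 ≤ n ∧ ε < m1 (cycleStart (n + 1)) Γᶜ := by
  refine ⟨fun n hn => part1 n hn, part2, ?_⟩
  intro ε hε Γ hΓ _
  obtain ⟨C, hC⟩ := hΓ.isBounded.exists_norm_le
  set s : ℝ := Real.sqrt 2 with hs
  have hs1 : 1 < s := one_lt_sqrt2
  have h1 : ∀ᶠ n : ℕ in atTop, ε <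
      (2 : ℝ) ^ (n - 1)
        / (2 ^ n + ((2 : ℝ) ^ ((n : ℝ) / 2) - 1) / ((2 : ℝ) ^ ((1:ℝ) / 2) - 1) - 1) :=
    part2.eventually (eventually_gt_nhds hε)
  have h2 : ∀ᶠ n : ℕ in atTop, C < s ^ (n - 1) :=
    ((tendsto_pow_atTop_atTop_of_one_lt hs1).comp
      (Filter.tendsto_sub_atTop_nat 1)).eventually_gt_atTop C
  obtain ⟨n, ⟨hn1, hn2⟩, hn3⟩ :=
    (((Filter.eventually_ge_atTop 1).and h1).and h2).exists
  refine ⟨n, hn1, ?_⟩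
  set a : ℝ := (2:ℝ) ^ (((n:ℝ) - 1)/2) with hadef
  have ha : a = s ^ (n-1) := by
    rw [hadef, show ((n:ℝ) - 1) = ((n-1:ℕ):ℝ) by
      rw [Nat.cast_sub hn1]; norm_num, rpow_nat_half]
  have hpt : ((a, a) : ℝ × ℝ) ∉ Γ := by
    intro hmem
    have hb := hC _ hmem
    have h3 : a ≤ ‖((a, a) : ℝ × ℝ)‖ := by
      calc a ≤ |a| := le_abs_self a
      _ = ‖((a,a) : ℝ × ℝ).1‖ := by rw [Real.norm_eq_abs]
      _ ≤ ‖((a,a) : ℝ × ℝ)‖ := norm_fst_le _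
    have hn3' : C < s ^ (n - 1) := hn3
    rw [← ha] at hn3'
    linarith
  have hsub : ({((a, a) : ℝ × ℝ)} : Set (ℝ × ℝ)) ⊆ Γᶜ :=
    Set.singleton_subset_iff.mpr hpt
  have hmono := m1_mono (cycleStart_pos hn1) hsub
  calc ε < (2 : ℝ) ^ (n - 1)
      / (2 ^ n + ((2 : ℝ) ^ ((n : ℝ) / 2) - 1) / ((2 : ℝ) ^ ((1:ℝ) / 2) - 1) - 1) := hn2
    _ = m1 (cycleStart (n+1)) {((a, a) : ℝ × ℝ)} := (part1 n hn1).symm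
    _ ≤ m1 (cycleStart (n+1)) Γᶜ := hmono
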